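/- α-equivalence on λ-calculus terms, the smallest equivalence relation generated by λx.M ≡ λy.(M{y/x}) whenever y is not free in M, is a congruence compatible with substitution: if M ≡α M' and for every variable v the substituted terms σ(v) ≡α σ'(v), then M bind σ ≡α M' bind σ'. Consequently the substitution monad structure on λ-terms descends to the quotient of Term[V] by α-equivalence, and this quotient is again a lawful monad (an algebra of the term monad). -/

import Mathlib

/-!
STATEMENT 1: α-equivalence on λ-terms (the smallest equivalence relation
generated by `λx.M ≡ λy.(M{y/x})` for `y` not free in `M`, closed under
the term constructors) is a congruence compatible with substitution:
if `M ≡α M'` and `σ v ≡α σ' v` for every variable `v`, then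
`M.bind σ ≡α M'.bind σ'`.  Consequently the substitution monad structure
descends to the quotient `Term[V]/≡α`, and the quotient is again a
lawful monad.
-/

/-- Untyped λ-terms over a type `V` of (named) variables. -/
inductive Term (V : Type) : Type
  | var : V → Term V
  | lam : V → Term V → Term V
  | app : Term V → Term V → Term V

namespace Term

variable {V : Type} [DecidableEq V] [Infinite V]

/-- Free variables of a term. -/
def fv : Term V → Finset V
  | var v => {v}
  | lam x t => fv t \ {x}
  | app t u => fv t ∪ fv u

/-- Naive renaming `M{y/x}` of the free occurrences of the variable `x`
by the variable `y`. -/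
def rename (x y : V) : Term V → Term V
  | var v => if v = x then var y else var v
  | lam z t => if z = x then lam z t else lam z (rename x y t)
  | app t u => app (rename x y t) (rename x y u)

/-- A variable fresh for a given finite set. -/
noncomputable def fresh (s : Finset V) : V :=
  (Infinite.exists_notMem_finset s).choose

/-- Simultaneous capture-avoiding substitution (monadic bind): the bound
variable of an abstraction is systematically renamed to a variable fresh
for everything in sight, so no free variable is ever captured. -/
noncomputable def bind (σ : V → Term V) : Term V → Term V
  | var v => σ v
  | app t u => app (bind σ t) (bind σ u)
  | lam x t =>
      let avoid : Finset V := ((fv t).erase x).biUnion (fun v => fv (σ v)) ∪ fv t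
      let y := fresh avoid
      lam y (bind (Function.update σ x (var y)) t)

/-- α-equivalence: the smallest equivalence relation containing all
instances `λx.M ≡ λy.(M{y/x})` with `y` not free in `M` and closed under
the term constructors. -/
inductive AEq : Term V → Term V → Prop
  | refl (t : Term V) : AEq t t
  | symm {t u : Term V} : AEq t u → AEq u t
  | trans {t u w : Term V} : AEq t u → AEq u w → AEq t w
  | appCong {t t' u u' : Term V} :
      AEq t t' → AEq u u' → AEq (app t u) (app t' u')
  | lamCong (x : V) {t t' : Term V} : AEq t t' → AEq (lam x t) (lam x t')
  | alpha (x y : V) (t : Term V) :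
      y ∉ fv t → AEq (lam x t) (lam y (rename x y t))

/-- α-equivalence as a setoid. -/
def aeqSetoid (V : Type) [DecidableEq V] [Infinite V] : Setoid (Term V) :=
  ⟨AEq, ⟨AEq.refl, AEq.symm, AEq.trans⟩⟩

/-- λ-terms up to α-equivalence. -/
def QTerm (V : Type) [DecidableEq V] [Infinite V] : Type :=
  Quotient (aeqSetoid V)

/-- The class of a term in the quotient. -/
def qmk (t : Term V) : QTerm V := Quotient.mk (aeqSetoid V) t


/-! ### Auxiliary development -/

theorem fresh_spec (s : Finset V) : fresh s ∉ s :=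
  (Infinite.exists_notMem_finset s).choose_spec

theorem bind_lam (σ : V → Term V) (x : V) (t : Term V) :
    bind σ (lam x t) =
      lam (fresh (((fv t).erase x).biUnion (fun v => fv (σ v)) ∪ fv t))
        (bind (Function.update σ x
          (var (fresh (((fv t).erase x).biUnion (fun v => fv (σ v)) ∪ fv t)))) t) := rfl

/-- Skeletons: λ-terms where bound occurrences/binders are anonymous. -/
inductive Sk (V : Type) : Type
  | fvar : V → Sk V
  | bnd : Sk V
  | lam : Sk V → Sk V
  | app : Sk V → Sk V → Sk V

/-- The skeleton of a term relative to a set `b` of bound variables. -/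
def skel (b : Finset V) : Term V → Sk V
  | var v => if v ∈ b then Sk.bnd else Sk.fvar v
  | lam x t => Sk.lam (skel (insert x b) t)
  | app t u => Sk.app (skel b t) (skel b u)

theorem skel_congr {b₁ b₂ : Finset V} (t : Term V)
    (h : ∀ v ∈ fv t, (v ∈ b₁ ↔ v ∈ b₂)) : skel b₁ t = skel b₂ t := by
  induction t generalizing b₁ b₂ with
  | var v =>
      have := h v (by simp [fv])
      by_cases hv : v ∈ b₁ <;> simp_all [skel]
  | lam x t ih =>
      simp only [skel, Sk.lam.injEq]
      refine ih ?_
      intro v hv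
      by_cases hvx : v = x
      · simp [hvx]
      · have := h v (by simp [fv, hv, hvx])
        simp [Finset.mem_insert, hvx, this]
  | app t u iht ihu =>
      simp only [skel, Sk.app.injEq]
      exact ⟨iht fun v hv => h v (by simp [fv, hv]),
             ihu fun v hv => h v (by simp [fv, hv])⟩

/-- Free variables of a skeleton. -/
def fvSk : Sk V → Finset V
  | Sk.fvar v => {v}
  | Sk.bnd => ∅
  | Sk.lam s => fvSk s
  | Sk.app s t => fvSk s ∪ fvSk t

theorem fvSk_skel (t : Term V) (b : Finset V) : fvSk (skel b t) = fv t \ b := by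
  induction t generalizing b with
  | var v =>
      by_cases hv : v ∈ b
      · simp only [skel, if_pos hv, fvSk, fv]
        ext w; simp only [Finset.notMem_empty, Finset.mem_sdiff, Finset.mem_singleton,
          false_iff, not_and, not_not]
        rintro rfl; exact hv
      · simp only [skel, if_neg hv, fvSk, fv]
        ext w; simp only [Finset.mem_singleton, Finset.mem_sdiff]
        constructor
        · rintro rfl; exact ⟨rfl, hv⟩
        · exact fun h => h.1
  | lam x t ih =>
      simp only [skel, fvSk, ih, fv]
      ext w; simp [Finset.mem_sdiff]; tauto
  | app t u iht ihu =>
      simp only [skel, fvSk, iht, ihu, fv]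
      ext w; simp [Finset.mem_sdiff]; tauto

theorem fv_rename_subset (x y : V) (t : Term V) :
    fv (rename x y t) ⊆ insert y (fv t \ {x}) := by
  induction t with
  | var v =>
      by_cases hv : v = x <;> simp [rename, fv, hv] <;> intro w hw <;> simp_all
  | lam z t ih =>
      by_cases hz : z = x
      · subst hz
        simp only [rename, if_pos rfl, if_true, fv]
        intro w hw; simp at hw; simp [hw.1, hw.2]
      · simp only [rename, if_neg hz, fv]
        intro w hw
        simp only [Finset.mem_sdiff, Finset.mem_singleton] at hw
        have := ih hw.1
        simp only [Finset.mem_insert, Finset.mem_sdiff, Finset.mem_singleton] at this ⊢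
        rcases this with h | h
        · exact Or.inl h
        · exact Or.inr ⟨⟨h.1, hw.2⟩, h.2⟩
  | app t u iht ihu =>
      simp only [rename, fv]
      intro w hw
      simp only [Finset.mem_union] at hw
      rcases hw with h | h
      · have := iht h
        simp only [Finset.mem_insert, Finset.mem_sdiff, Finset.mem_singleton,
          Finset.mem_union] at this ⊢
        tauto
      · have := ihu h
        simp only [Finset.mem_insert, Finset.mem_sdiff, Finset.mem_singleton,
          Finset.mem_union] at this ⊢
        tauto

/-- Renaming lemma for skeletons. -/
theorem skel_rename (x y : V) (t : Term V) (b : Finset V)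
    (h : y ∉ fv t ∨ y ∈ b) :
    skel (insert x b) t = skel (insert y b) (rename x y t) := by
  induction t generalizing b with
  | var v =>
      by_cases hvx : v = x
      · subst hvx; simp [rename, skel]
      · simp only [rename, if_neg hvx, skel]
        by_cases hvy : v = y
        · subst hvy
          rcases h with h | h
          · exact absurd (by simp [fv]) h
          · simp [h, hvx]
        · simp [Finset.mem_insert, hvx, hvy]
  | lam z t ih =>
      by_cases hzx : z = x
      · subst hzx
        simp only [rename, if_pos rfl, if_true, skel, Sk.lam.injEq]
        refine skel_congr t ?_
        intro v hv
        rcases h with h | h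
        · by_cases hvz : v = z
          · simp [hvz]
          · have hvy : v ≠ y := by rintro rfl; exact h (by simp [fv, hv, hvz])
            simp only [Finset.mem_insert, hvy]
            tauto
        · simp only [Finset.mem_insert]
          constructor
          · rintro (rfl | rfl | hb)
            exacts [Or.inl rfl, Or.inl rfl, Or.inr (Or.inr hb)]
          · rintro (rfl | rfl | hb)
            exacts [Or.inl rfl, Or.inr (Or.inr h), Or.inr (Or.inr hb)]
      · simp only [rename, if_neg hzx, skel, Sk.lam.injEq]
        have h' : y ∉ fv t ∨ y ∈ insert z b := by
          rcases h with h | h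
          · by_cases hyz : y = z
            · exact Or.inr (by simp [hyz])
            · exact Or.inl (fun hy => h (by simp [fv, hy, hyz]))
          · exact Or.inr (by simp [h])
        have := ih (insert z b) h'
        calc skel (insert z (insert x b)) t
            = skel (insert x (insert z b)) t := by
              refine skel_congr t ?_; intro v _; simp [Finset.mem_insert]; tauto
          _ = skel (insert y (insert z b)) (rename x y t) := this
          _ = skel (insert z (insert y b)) (rename x y t) := by
              refine skel_congr _ ?_; intro v _; simp [Finset.mem_insert]; tauto
  | app t u iht ihu =>
      simp only [rename, skel, Sk.app.injEq]
      constructor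
      · refine iht b ?_
        rcases h with h | h
        · exact Or.inl fun hy => h (by simp [fv, hy])
        · exact Or.inr h
      · refine ihu b ?_
        rcases h with h | h
        · exact Or.inl fun hy => h (by simp [fv, hy])
        · exact Or.inr h

/-- Soundness: α-equivalent terms have equal skeletons. -/
theorem skel_aeq {t u : Term V} (h : AEq t u) : ∀ b : Finset V, skel b t = skel b u := by
  induction h with
  | refl t => intro b; rfl
  | symm h ih => intro b; exact (ih b).symm
  | trans h₁ h₂ ih₁ ih₂ => intro b; exact (ih₁ b).trans (ih₂ b)
  | appCong h₁ h₂ ih₁ ih₂ => intro b; simp only [skel, ih₁ b, ih₂ b]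
  | lamCong x h ih => intro b; simp only [skel, ih]
  | alpha x y t hy =>
      intro b
      simp only [skel, Sk.lam.injEq]
      exact skel_rename x y t b (Or.inl hy)

/-- α-equivalent terms have the same free variables. -/
theorem fv_aeq {t u : Term V} (h : AEq t u) : fv t = fv u := by
  have h₁ := fvSk_skel t (∅ : Finset V)
  have h₂ := fvSk_skel u (∅ : Finset V)
  rw [skel_aeq h ∅] at h₁
  simpa using h₁.symm.trans h₂

/-- Free variables of a substituted term. -/
theorem fv_bind (σ : V → Term V) (t : Term V) :
    fv (bind σ t) = (fv t).biUnion fun v => fv (σ v) := by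
  induction t generalizing σ with
  | var v => simp [bind, fv]
  | app t u iht ihu =>
      simp only [bind, fv, iht, ihu]
      ext w; simp only [Finset.mem_union, Finset.mem_biUnion]
      constructor
      · rintro (⟨v, hv, hw⟩ | ⟨v, hv, hw⟩)
        exacts [⟨v, Or.inl hv, hw⟩, ⟨v, Or.inr hv, hw⟩]
      · rintro ⟨v, hv | hv, hw⟩
        exacts [Or.inl ⟨v, hv, hw⟩, Or.inr ⟨v, hv, hw⟩]
  | lam x t ih =>
      rw [bind_lam]
      set A := ((fv t).erase x).biUnion (fun v => fv (σ v)) ∪ fv t with hA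
      set y := fresh A with hy
      have hyA : y ∉ A := fresh_spec A
      simp only [fv, ih]
      ext w
      simp only [Finset.mem_sdiff, Finset.mem_biUnion, Finset.mem_singleton,
        Finset.mem_erase]
      constructor
      · rintro ⟨⟨v, hv, hw⟩, hwy⟩
        by_cases hvx : v = x
        · subst hvx
          rw [Function.update_self] at hw
          simp [fv] at hw
          exact absurd hw hwy
        · rw [Function.update_of_ne hvx] at hw
          exact ⟨v, ⟨hv, hvx⟩, hw⟩
      · rintro ⟨v, ⟨hv, hvx⟩, hw⟩
        refine ⟨⟨v, hv, by rw [Function.update_of_ne hvx]; exact hw⟩, ?_⟩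
        rintro rfl
        refine hyA ?_
        rw [hA]
        exact Finset.mem_union_left _
          (Finset.mem_biUnion.2 ⟨v, Finset.mem_erase.2 ⟨hvx, hv⟩, hw⟩)

/-- `bind` only depends on the substitution's values on free variables. -/
theorem bind_congr_fv {σ σ' : V → Term V} (t : Term V)
    (h : ∀ v ∈ fv t, σ v = σ' v) : bind σ t = bind σ' t := by
  induction t generalizing σ σ' with
  | var v => exact h v (by simp [fv])
  | app t u iht ihu =>
      simp only [bind]
      rw [iht fun v hv => h v (by simp [fv, hv]),
          ihu fun v hv => h v (by simp [fv, hv])]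
  | lam x t ih =>
      rw [bind_lam, bind_lam]
      have hAV : (((fv t).erase x).biUnion fun v => fv (σ v)) =
          ((fv t).erase x).biUnion fun v => fv (σ' v) := by
        refine Finset.biUnion_congr rfl ?_
        intro v hv
        refine congrArg fv (h v ?_)
        simp only [fv, Finset.mem_sdiff, Finset.mem_singleton]
        simp only [Finset.mem_erase] at hv
        exact ⟨hv.2, hv.1⟩
      rw [hAV]
      congr 1
      refine ih ?_
      intro v hv
      by_cases hvx : v = x
      · subst hvx; simp
      · rw [Function.update_of_ne hvx, Function.update_of_ne hvx]
        exact h v (by simp [fv, hv, hvx])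

/-- Master lemma: skeletons of simultaneous substitutions agree. -/
theorem master (t : Term V) : ∀ (t' : Term V) (b b' B B' : Finset V) (σ σ' : V → Term V),
    skel b t = skel b' t' →
    (∀ v, v ∈ fv t → v ∉ b → skel ∅ (σ v) = skel ∅ (σ' v)) →
    (∀ v, v ∈ fv t → v ∉ b → ∀ w ∈ fv (σ v), w ∉ B) →
    (∀ v, v ∈ fv t' → v ∉ b' → ∀ w ∈ fv (σ' v), w ∉ B') →
    (∀ v ∈ b, ∃ w ∈ B, σ v = var w) →
    (∀ v ∈ b', ∃ w ∈ B', σ' v = var w) →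
    skel B (bind σ t) = skel B' (bind σ' t') := by
  induction t with
  | var v =>
      intro t' b b' B B' σ σ' H0 Hfree Hd Hd' Hb Hb'
      by_cases hvb : v ∈ b
      · simp only [skel, if_pos hvb] at H0
        cases t' with
        | var v' =>
            by_cases hv'b : v' ∈ b'
            · obtain ⟨w, hwB, hw⟩ := Hb v hvb
              obtain ⟨w', hwB', hw'⟩ := Hb' v' hv'b
              show skel B (σ v) = skel B' (σ' v')
              rw [hw, hw']
              simp [skel, hwB, hwB']
            · simp [skel, if_neg hv'b] at H0
        | lam x' s' => simp [skel] at H0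
        | app t₁ t₂ => simp [skel] at H0
      · simp only [skel, if_neg hvb] at H0
        cases t' with
        | var v' =>
            by_cases hv'b : v' ∈ b'
            · simp [skel, if_pos hv'b] at H0
            · simp only [skel, if_neg hv'b, Sk.fvar.injEq] at H0
              subst H0
              show skel B (σ v) = skel B' (σ' v)
              have e1 : skel B (σ v) = skel ∅ (σ v) :=
                skel_congr _ fun w hw => by
                  simp [Hd v (by simp [fv]) hvb w hw]
              have e2 : skel B' (σ' v) = skel ∅ (σ' v) :=
                skel_congr _ fun w hw => by
                  simp [Hd' v (by simp [fv]) hv'b w hw]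
              rw [e1, e2]
              exact Hfree v (by simp [fv]) hvb
        | lam x' s' => simp [skel] at H0
        | app t₁ t₂ => simp [skel] at H0
  | app t₁ t₂ ih₁ ih₂ =>
      intro t' b b' B B' σ σ' H0 Hfree Hd Hd' Hb Hb'
      cases t' with
      | var v' =>
          by_cases hv'b : v' ∈ b' <;> simp [skel, hv'b] at H0
      | lam x' s' => simp [skel] at H0
      | app t₁' t₂' =>
          simp only [skel, Sk.app.injEq] at H0
          show Sk.app _ _ = Sk.app _ _
          rw [ih₁ t₁' b b' B B' σ σ' H0.1
                (fun v hv hvb => Hfree v (by simp [fv, hv]) hvb)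
                (fun v hv hvb => Hd v (by simp [fv, hv]) hvb)
                (fun v hv hvb => Hd' v (by simp [fv, hv]) hvb) Hb Hb',
              ih₂ t₂' b b' B B' σ σ' H0.2
                (fun v hv hvb => Hfree v (by simp [fv, hv]) hvb)
                (fun v hv hvb => Hd v (by simp [fv, hv]) hvb)
                (fun v hv hvb => Hd' v (by simp [fv, hv]) hvb) Hb Hb']
  | lam x s ih =>
      intro t' b b' B B' σ σ' H0 Hfree Hd Hd' Hb Hb'
      cases t' with
      | var v' =>
          by_cases hv'b : v' ∈ b' <;> simp [skel, hv'b] at H0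
      | app t₁ t₂ => simp [skel] at H0
      | lam x' s' =>
          simp only [skel, Sk.lam.injEq] at H0
          rw [bind_lam, bind_lam]
          set A := ((fv s).erase x).biUnion (fun v => fv (σ v)) ∪ fv s with hA
          set z := fresh A with hz
          set A' := ((fv s').erase x').biUnion (fun v => fv (σ' v)) ∪ fv s' with hA'
          set z' := fresh A' with hz'
          have hzA : z ∉ A := fresh_spec A
          have hz'A : z' ∉ A' := fresh_spec A'
          show Sk.lam _ = Sk.lam _
          rw [Sk.lam.injEq]
          have hfvs : fv s \ insert x b = fv s' \ insert x' b' := by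
            rw [← fvSk_skel, ← fvSk_skel, H0]
          refine ih s' (insert x b) (insert x' b') (insert z B) (insert z' B') _ _ H0
            ?_ ?_ ?_ ?_ ?_
          · -- Hfree
            intro v hv hvb
            have hvx : v ≠ x := fun e => hvb (by simp [e])
            have hv' : v ∈ fv s' \ insert x' b' := by
              rw [← hfvs]; simp [hv, hvb]
            have hvx' : v ≠ x' := fun e => by
              simp [e] at hv'
            rw [Function.update_of_ne hvx, Function.update_of_ne hvx']
            exact Hfree v (by simp [fv, hv, hvx]) (fun h => hvb (by simp [h]))
          · -- Hd
            intro v hv hvb w hw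
            have hvx : v ≠ x := fun e => hvb (by simp [e])
            rw [Function.update_of_ne hvx] at hw
            simp only [Finset.mem_insert, not_or]
            constructor
            · rintro rfl
              refine hzA ?_
              rw [hA]
              exact Finset.mem_union_left _ (Finset.mem_biUnion.2 ⟨v, Finset.mem_erase.2 ⟨hvx, hv⟩, hw⟩)
            · exact Hd v (by simp [fv, hv, hvx]) (fun h => hvb (by simp [h])) w hw
          · -- Hd'
            intro v hv hvb w hw
            have hvx : v ≠ x' := fun e => hvb (by simp [e])
            rw [Function.update_of_ne hvx] at hw
            simp only [Finset.mem_insert, not_or]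
            constructor
            · rintro rfl
              refine hz'A ?_
              rw [hA']
              exact Finset.mem_union_left _ (Finset.mem_biUnion.2 ⟨v, Finset.mem_erase.2 ⟨hvx, hv⟩, hw⟩)
            · exact Hd' v (by simp [fv, hv, hvx]) (fun h => hvb (by simp [h])) w hw
          · -- Hb
            intro v hv
            by_cases hvx : v = x
            · subst hvx
              exact ⟨z, by simp, by simp⟩
            · rw [Function.update_of_ne hvx]
              obtain ⟨w, hwB, hw⟩ := Hb v (by
                rcases Finset.mem_insert.1 hv with h | h
                · exact absurd h hvx
                · exact h)
              exact ⟨w, by simp [hwB], hw⟩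
          · -- Hb'
            intro v hv
            by_cases hvx : v = x'
            · subst hvx
              exact ⟨z', by simp, by simp⟩
            · rw [Function.update_of_ne hvx]
              obtain ⟨w, hwB, hw⟩ := Hb' v (by
                rcases Finset.mem_insert.1 hv with h | h
                · exact absurd h hvx
                · exact h)
              exact ⟨w, by simp [hwB], hw⟩

/-- `bind` along a pointwise-trivial substitution preserves the skeleton. -/
theorem bind_id_skel (t : Term V) : ∀ (b B : Finset V) (σ : V → Term V),
    (∀ v, v ∈ fv t → v ∉ b → σ v = var v ∧ v ∉ B) →
    (∀ v ∈ b, ∃ w ∈ B, σ v = var w) →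
    skel B (bind σ t) = skel b t := by
  induction t with
  | var v =>
      intro b B σ Hfree Hb
      by_cases hvb : v ∈ b
      · obtain ⟨w, hwB, hw⟩ := Hb v hvb
        show skel B (σ v) = _
        rw [hw]
        simp [skel, hwB, hvb]
      · obtain ⟨h1, h2⟩ := Hfree v (by simp [fv]) hvb
        show skel B (σ v) = _
        rw [h1]
        simp [skel, h2, hvb]
  | app t₁ t₂ ih₁ ih₂ =>
      intro b B σ Hfree Hb
      show Sk.app _ _ = Sk.app _ _
      rw [ih₁ b B σ (fun v hv hvb => Hfree v (by simp [fv, hv]) hvb) Hb,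
          ih₂ b B σ (fun v hv hvb => Hfree v (by simp [fv, hv]) hvb) Hb]
  | lam x s ih =>
      intro b B σ Hfree Hb
      rw [bind_lam]
      set A := ((fv s).erase x).biUnion (fun v => fv (σ v)) ∪ fv s with hA
      set z := fresh A with hz
      have hzA : z ∉ A := fresh_spec A
      show Sk.lam _ = Sk.lam _
      rw [Sk.lam.injEq]
      refine ih (insert x b) (insert z B) _ ?_ ?_
      · intro v hv hvb
        have hvx : v ≠ x := fun e => hvb (by simp [e])
        rw [Function.update_of_ne hvx]
        obtain ⟨h1, h2⟩ := Hfree v (by simp [fv, hv, hvx]) (fun h => hvb (by simp [h]))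
        refine ⟨h1, ?_⟩
        simp only [Finset.mem_insert, not_or]
        refine ⟨fun e => hzA ?_, h2⟩
        rw [hA, ← e]
        exact Finset.mem_union_right _ hv
      · intro v hv
        by_cases hvx : v = x
        · subst hvx
          exact ⟨z, by simp, by simp⟩
        · rw [Function.update_of_ne hvx]
          obtain ⟨w, hwB, hw⟩ := Hb v (by
            rcases Finset.mem_insert.1 hv with h | h
            · exact absurd h hvx
            · exact h)
          exact ⟨w, by simp [hwB], hw⟩

/-- Associativity of `bind` at the level of skeletons. -/
theorem bind_assoc_skel (t : Term V) : ∀ (B B' : Finset V) (σ τ ρ : V → Term V),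
    (∀ v ∈ fv t, skel B (bind τ (σ v)) = skel B' (ρ v)) →
    skel B (bind τ (bind σ t)) = skel B' (bind ρ t) := by
  induction t with
  | var v =>
      intro B B' σ τ ρ H
      exact H v (by simp [fv])
  | app t₁ t₂ ih₁ ih₂ =>
      intro B B' σ τ ρ H
      show Sk.app _ _ = Sk.app _ _
      rw [ih₁ B B' σ τ ρ (fun v hv => H v (by simp [fv, hv])),
          ih₂ B B' σ τ ρ (fun v hv => H v (by simp [fv, hv]))]
  | lam x s ih =>
      intro B B' σ τ ρ H
      rw [bind_lam σ x s, bind_lam ρ x s]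
      set A₁ := ((fv s).erase x).biUnion (fun v => fv (σ v)) ∪ fv s with hA₁
      set z := fresh A₁ with hzdef
      set σ₁ := Function.update σ x (var z) with hσ₁
      set A₃ := ((fv s).erase x).biUnion (fun v => fv (ρ v)) ∪ fv s with hA₃
      set z₂ := fresh A₃ with hz₂def
      have hzA₁ : z ∉ A₁ := fresh_spec A₁
      have hz₂A₃ : z₂ ∉ A₃ := fresh_spec A₃
      rw [bind_lam τ z (bind σ₁ s)]
      set s₁ := bind σ₁ s with hs₁
      set A₂ := ((fv s₁).erase z).biUnion (fun v => fv (τ v)) ∪ fv s₁ with hA₂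
      set w := fresh A₂ with hwdef
      have hwA₂ : w ∉ A₂ := fresh_spec A₂
      show Sk.lam _ = Sk.lam _
      rw [Sk.lam.injEq]
      refine ih (insert w B) (insert z₂ B') σ₁ _ _ ?_
      intro v hv
      by_cases hvx : v = x
      · subst hvx
        have e1 : σ₁ v = var z := by simp [hσ₁]
        rw [e1]
        show skel _ (Function.update τ z (var w) z) = skel _ (Function.update ρ v (var z₂) v)
        rw [Function.update_self, Function.update_self]
        simp [skel]
      · have e1 : σ₁ v = σ v := Function.update_of_ne hvx _ _
        have e2 : Function.update ρ x (var z₂) v = ρ v := Function.update_of_ne hvx _ _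
        rw [e1, e2]
        have hfvσ : fv (σ v) ⊆ A₁ := by
          rw [hA₁]
          intro u hu
          exact Finset.mem_union_left _
            (Finset.mem_biUnion.2 ⟨v, Finset.mem_erase.2 ⟨hvx, hv⟩, hu⟩)
        have step1 : bind (Function.update τ z (var w)) (σ v) = bind τ (σ v) := by
          refine bind_congr_fv _ ?_
          intro u hu
          have huz : u ≠ z := fun e => hzA₁ (e ▸ hfvσ hu)
          exact Function.update_of_ne huz _ _
        rw [step1]
        have step2 : skel (insert w B) (bind τ (σ v)) = skel B (bind τ (σ v)) := by
          refine skel_congr _ ?_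
          intro u hu
          have huw : u ≠ w := by
            rintro rfl
            refine hwA₂ ?_
            rw [hA₂]
            rw [fv_bind] at hu
            obtain ⟨p, hp, hup⟩ := Finset.mem_biUnion.1 hu
            refine Finset.mem_union_left _ (Finset.mem_biUnion.2 ⟨p, ?_, hup⟩)
            refine Finset.mem_erase.2 ⟨fun e => hzA₁ (e ▸ hfvσ hp), ?_⟩
            rw [hs₁, fv_bind]
            refine Finset.mem_biUnion.2 ⟨v, hv, ?_⟩
            rw [hσ₁, Function.update_of_ne hvx]
            exact hp
          simp [Finset.mem_insert, huw]
        have step3 : skel (insert z₂ B') (ρ v) = skel B' (ρ v) := by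
          refine skel_congr _ ?_
          intro u hu
          have huz₂ : u ≠ z₂ := by
            rintro rfl
            refine hz₂A₃ ?_
            rw [hA₃]
            exact Finset.mem_union_left _
              (Finset.mem_biUnion.2 ⟨v, Finset.mem_erase.2 ⟨hvx, hv⟩, hu⟩)
          simp [Finset.mem_insert, huz₂]
        rw [step2, step3]
        exact H v (by simp [fv, hv, hvx])

/-- All variables (free, bound, binders) occurring in a term. -/
def allv : Term V → Finset V
  | var v => {v}
  | lam x t => insert x (allv t)
  | app t u => allv t ∪ allv u

theorem fv_subset_allv (t : Term V) : fv t ⊆ allv t := by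
  induction t with
  | var v => simp [fv, allv]
  | lam x t ih =>
      intro w hw
      simp only [fv, Finset.mem_sdiff, Finset.mem_singleton] at hw
      simp only [allv, Finset.mem_insert]
      exact Or.inr (ih hw.1)
  | app t u iht ihu =>
      intro w hw
      simp only [fv, Finset.mem_union] at hw
      simp only [allv, Finset.mem_union]
      rcases hw with h | h
      · exact Or.inl (iht h)
      · exact Or.inr (ihu h)

/-- Canonical renaming of all binders to a fixed variable `c`. -/
def canonC (c : V) : Term V → Term V
  | var v => var v
  | lam x t => lam c (rename x c (canonC c t))
  | app t u => app (canonC c t) (canonC c u)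

theorem fv_canon {c : V} (t : Term V) (hc : c ∉ allv t) : fv (canonC c t) ⊆ fv t := by
  induction t with
  | var v => simp [canonC]
  | lam x t ih =>
      have hc' : c ∉ allv t := fun h => hc (by simp [allv, h])
      intro w hw
      simp only [canonC, fv, Finset.mem_sdiff, Finset.mem_singleton] at hw
      have := fv_rename_subset x c (canonC c t) hw.1
      simp only [Finset.mem_insert, Finset.mem_sdiff, Finset.mem_singleton] at this
      rcases this with h | h
      · exact absurd h hw.2
      · simp only [fv, Finset.mem_sdiff, Finset.mem_singleton]
        exact ⟨ih hc' h.1, h.2⟩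
  | app t u iht ihu =>
      have hct : c ∉ allv t := fun h => hc (by simp [allv, h])
      have hcu : c ∉ allv u := fun h => hc (by simp [allv, h])
      intro w hw
      simp only [canonC, fv, Finset.mem_union] at hw ⊢
      rcases hw with h | h
      · exact Or.inl (iht hct h)
      · exact Or.inr (ihu hcu h)

theorem aeq_canon {c : V} (t : Term V) (hc : c ∉ allv t) : AEq t (canonC c t) := by
  induction t with
  | var v => exact AEq.refl _
  | lam x t ih =>
      have hc' : c ∉ allv t := fun h => hc (by simp [allv, h])
      have h1 : AEq (lam x t) (lam x (canonC c t)) := AEq.lamCong x (ih hc')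
      have hcfv : c ∉ fv (canonC c t) := fun h =>
        hc' (fv_subset_allv t (fv_canon t hc' h))
      exact AEq.trans h1 (AEq.alpha x c (canonC c t) hcfv)
  | app t u iht ihu =>
      have hct : c ∉ allv t := fun h => hc (by simp [allv, h])
      have hcu : c ∉ allv u := fun h => hc (by simp [allv, h])
      exact AEq.appCong (iht hct) (ihu hcu)

/-- Reading back a term from a skeleton, with all anonymous data set to `c`. -/
def fromSkel (c : V) : Sk V → Term V
  | Sk.fvar v => var v
  | Sk.bnd => var c
  | Sk.lam s => lam c (fromSkel c s)
  | Sk.app s t => app (fromSkel c s) (fromSkel c t)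

/-- Simultaneous naive renaming of a set of variables to `c`. -/
def renameSet (b : Finset V) (c : V) : Term V → Term V
  | var v => if v ∈ b then var c else var v
  | lam z t => lam z (renameSet (b.erase z) c t)
  | app t u => app (renameSet b c t) (renameSet b c u)

theorem renameSet_rename {x c : V} (hxc : x ≠ c) :
    ∀ (A : Term V) (b : Finset V), c ∉ b →
    renameSet b c (rename x c A) = renameSet (insert x b) c A := by
  intro A
  induction A with
  | var v =>
      intro b hcb
      by_cases hvx : v = x
      · subst hvx
        simp [rename, renameSet, hcb]
      · simp [rename, renameSet, hvx, Finset.mem_insert]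
  | lam z t ih =>
      intro b hcb
      by_cases hzx : z = x
      · subst hzx
        simp only [rename, if_pos rfl, if_true, renameSet, Finset.erase_insert_eq_erase]
      · simp only [rename, if_neg hzx, renameSet, lam.injEq, true_and]
        rw [ih (b.erase z) (fun h => hcb (Finset.mem_of_mem_erase h))]
        rw [Finset.erase_insert_of_ne (fun e => hzx e.symm)]
  | app t u iht ihu =>
      intro b hcb
      simp only [rename, renameSet, app.injEq]
      exact ⟨iht b hcb, ihu b hcb⟩

theorem canon_eq_fromSkel {c : V} (t : Term V) : ∀ b : Finset V, c ∉ allv t → c ∉ b →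
    renameSet b c (canonC c t) = fromSkel c (skel b t) := by
  induction t with
  | var v =>
      intro b hc hcb
      simp only [canonC, renameSet, skel]
      by_cases hv : v ∈ b <;> simp [hv, fromSkel]
  | lam x t ih =>
      intro b hc hcb
      have hc' : c ∉ allv t := fun h => hc (by simp [allv, h])
      have hxc : x ≠ c := fun e => hc (by simp [allv, e])
      simp only [canonC, renameSet, skel, fromSkel, lam.injEq, true_and]
      rw [Finset.erase_eq_of_notMem hcb]
      rw [renameSet_rename hxc (canonC c t) b hcb]
      exact ih (insert x b) hc' (by simp [Finset.mem_insert, hcb, Ne.symm hxc])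
  | app t u iht ihu =>
      intro b hc hcb
      have hct : c ∉ allv t := fun h => hc (by simp [allv, h])
      have hcu : c ∉ allv u := fun h => hc (by simp [allv, h])
      simp only [canonC, renameSet, skel, fromSkel, app.injEq]
      exact ⟨iht b hct hcb, ihu b hcu hcb⟩

theorem renameSet_empty (c : V) (t : Term V) : renameSet ∅ c t = t := by
  induction t with
  | var v => simp [renameSet]
  | lam z t ih => simp [renameSet, Finset.erase_empty, ih]
  | app t u iht ihu => simp [renameSet, iht, ihu]

/-- Completeness: terms with equal skeletons are α-equivalent. -/
theorem aeq_of_skel {t u : Term V} (h : skel (∅ : Finset V) t = skel ∅ u) : AEq t u := by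
  set c := fresh (allv t ∪ allv u) with hc
  have hcm : c ∉ allv t ∪ allv u := fresh_spec _
  have hct : c ∉ allv t := fun h' => hcm (Finset.mem_union_left _ h')
  have hcu : c ∉ allv u := fun h' => hcm (Finset.mem_union_right _ h')
  have e : canonC c t = canonC c u := by
    rw [← renameSet_empty c (canonC c t), ← renameSet_empty c (canonC c u),
        canon_eq_fromSkel t ∅ hct (by simp), canon_eq_fromSkel u ∅ hcu (by simp), h]
  exact AEq.trans (aeq_canon t hct) (e ▸ AEq.symm (aeq_canon u hcu))

/-- α-equivalence is a congruence for `bind`. -/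
theorem aeq_bind {M M' : Term V} {σ σ' : V → Term V}
    (h : AEq M M') (hσ : ∀ v, AEq (σ v) (σ' v)) :
    AEq (bind σ M) (bind σ' M') := by
  refine aeq_of_skel ?_
  refine master M M' ∅ ∅ ∅ ∅ σ σ' (skel_aeq h ∅) ?_ ?_ ?_ ?_ ?_
  · exact fun v _ _ => skel_aeq (hσ v) ∅
  · exact fun v _ _ w _ h => (Finset.notMem_empty w) h
  · exact fun v _ _ w _ h => (Finset.notMem_empty w) h
  · exact fun v hv => absurd hv (Finset.notMem_empty v)
  · exact fun v hv => absurd hv (Finset.notMem_empty v)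

/-- Right identity, up to α. -/
theorem aeq_bind_var (M : Term V) : AEq (bind var M) M := by
  refine aeq_of_skel ?_
  refine bind_id_skel M ∅ ∅ var ?_ ?_
  · exact fun v _ _ => ⟨rfl, Finset.notMem_empty v⟩
  · exact fun v hv => absurd hv (Finset.notMem_empty v)

/-- Associativity, up to α. -/
theorem aeq_bind_bind (M : Term V) (σ τ : V → Term V) :
    AEq (bind τ (bind σ M)) (bind (fun v => bind τ (σ v)) M) := by
  refine aeq_of_skel ?_
  exact bind_assoc_skel M ∅ ∅ σ τ _ (fun v _ => rfl)

theorem aeq_out (M : Term V) : AEq (Quotient.out (qmk M)) M :=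
  Quotient.exact (Quotient.out_eq (qmk M))

/-- The induced substitution on the quotient. -/
noncomputable def qbind (t : QTerm V) (f : V → QTerm V) : QTerm V :=
  Quotient.liftOn t (fun M => qmk (bind (fun v => Quotient.out (f v)) M))
    (fun _ _ h => Quotient.sound (aeq_bind h (fun _ => AEq.refl _)))

theorem qbind_mk (M : Term V) (f : V → QTerm V) :
    qbind (qmk M) f = qmk (bind (fun v => Quotient.out (f v)) M) := rfl

/-- α-equivalence is compatible with substitution
(it is a congruence for the monadic bind), hence the substitution monad
structure descends to the quotient of `Term V` by α-equivalence, and the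
quotient is again a lawful monad (an algebra of the term monad). -/
theorem alpha_congruence_and_quotient_monad :
    -- compatibility of α-equivalence with substitution
    (∀ (M M' : Term V) (σ σ' : V → Term V),
        AEq M M' → (∀ v, AEq (σ v) (σ' v)) → AEq (bind σ M) (bind σ' M')) ∧
    -- the monad structure descends to the quotient and is lawful there
    (∃ qbind : QTerm V → (V → QTerm V) → QTerm V,
      -- qbind is induced by bind
      (∀ (M : Term V) (σ : V → Term V),
        qbind (qmk M) (fun v => qmk (σ v)) = qmk (bind σ M)) ∧
      -- left identity
      (∀ (v : V) (f : V → QTerm V), qbind (qmk (var v)) f = f v) ∧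
      -- right identity
      (∀ t : QTerm V, qbind t (fun v => qmk (var v)) = t) ∧
      -- associativity
      (∀ (t : QTerm V) (f g : V → QTerm V),
        qbind (qbind t f) g = qbind t (fun v => qbind (f v) g))) := by
  constructor
  · exact fun M M' σ σ' h hσ => aeq_bind h hσ
  · refine ⟨qbind, ?_, ?_, ?_, ?_⟩
    · intro M σ
      rw [qbind_mk]
      exact Quotient.sound (aeq_bind (AEq.refl M) (fun v => aeq_out (σ v)))
    · intro v f
      rw [qbind_mk]
      show qmk (Quotient.out (f v)) = f v
      exact Quotient.out_eq (f v)
    · intro t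
      obtain ⟨M, rfl⟩ := Quotient.exists_rep t
      show qbind (qmk M) _ = qmk M
      rw [qbind_mk]
      refine Quotient.sound ?_
      exact AEq.trans (aeq_bind (AEq.refl M) (fun v => aeq_out (var v))) (aeq_bind_var M)
    · intro t f g
      obtain ⟨M, rfl⟩ := Quotient.exists_rep t
      show qbind (qbind (qmk M) f) g = qbind (qmk M) _
      rw [qbind_mk, qbind_mk, qbind_mk]
      refine Quotient.sound ?_
      have h1 : ∀ v, AEq (Quotient.out (qbind (f v) g))
          (bind (fun u => Quotient.out (g u)) (Quotient.out (f v))) := by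
        intro v
        have e : qbind (f v) g = qmk (bind (fun u => Quotient.out (g u)) (Quotient.out (f v))) := by
          conv_lhs => rw [← Quotient.out_eq (f v)]
          rfl
        rw [e]
        exact aeq_out _
      refine AEq.trans (aeq_bind_bind M _ _) ?_
      exact AEq.symm (aeq_bind (AEq.refl M) h1)

end Term
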